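/- Let ν be a Borel probability measure on ℝ whose support is contained in [0, B] for some real B ≥ 1, with mean ∫ s dν(s) = 1. Define g(u) = (u−1)·∫ s/(u−s) dν(s) for u ∈ (B, ∞). Then (i) g(u) ≥ 1 for every u > B, and (ii) lim_{u→∞} g(u) = 1. Consequently, for any c > 0 the function κ(u) = c·g(u) satisfies κ(u) ≥ c for all u > B and κ(u) → c as u → ∞. -/

import Mathlib

open MeasureTheory Set Filter

/-- Lower bound and limit of the normalized GIC increment function: if `ν` is a Borel
probability measure supported in `[0, B]` (`B ≥ 1`) with mean `1`, then
`g(u) = (u-1) ∫ s/(u-s) dν(s)` satisfies `g(u) ≥ 1` for all `u > B` and `g(u) → 1` as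
`u → ∞`; consequently `κ(u) = c g(u)` satisfies `κ(u) ≥ c` on `(B, ∞)` and `κ(u) → c`. -/
theorem stmt5 (B : ℝ) (hB : 1 ≤ B) (ν : Measure ℝ) [IsProbabilityMeasure ν]
    (hsupp : ν (Set.Icc (0 : ℝ) B)ᶜ = 0)
    (hmean : (∫ s, s ∂ν) = 1)
    (g : ℝ → ℝ) (hg : ∀ u : ℝ, g u = (u - 1) * ∫ s, s / (u - s) ∂ν) :
    (∀ u : ℝ, B < u → 1 ≤ g u) ∧
    Tendsto g atTop (nhds 1) ∧
    ∀ c : ℝ, 0 < c →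
      (∀ u : ℝ, B < u → c ≤ c * g u) ∧
      Tendsto (fun u => c * g u) atTop (nhds c) := by
  have hae : ∀ᵐ s ∂ν, s ∈ Set.Icc (0 : ℝ) B := by
    rw [ae_iff]
    exact hsupp
  -- integrability of the identity
  have hid : Integrable (fun s : ℝ => s) ν := by
    refine ⟨measurable_id.aestronglyMeasurable, ?_⟩
    apply HasFiniteIntegral.of_bounded (C := B)
    filter_upwards [hae] with s hs
    rw [Real.norm_eq_abs, abs_le]
    exact ⟨by linarith [hs.1], hs.2⟩
  -- Main claim for each u > B
  have main : ∀ u : ℝ, B < u → 1 ≤ g u ∧ |g u - 1| ≤ B ^ 2 / (u - B) := by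
    intro u hu
    have hu1 : (1 : ℝ) < u := lt_of_le_of_lt hB hu
    have huB : (0 : ℝ) < u - B := by linarith
    -- integrability of s/(u-s)
    have meas1 : Measurable fun s : ℝ => s / (u - s) :=
      measurable_id.div (measurable_const.sub measurable_id)
    have hf : Integrable (fun s : ℝ => s / (u - s)) ν := by
      refine ⟨meas1.aestronglyMeasurable, ?_⟩
      apply HasFiniteIntegral.of_bounded (C := B / (u - B))
      filter_upwards [hae] with s hs
      have hus : (0 : ℝ) < u - s := by linarith [hs.2]
      rw [Real.norm_eq_abs, abs_of_nonneg (div_nonneg hs.1 hus.le)]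
      exact div_le_div₀ (by linarith) hs.2 huB (by linarith [hs.2])
    -- pointwise bound on s(s-1)/(u-s)
    have habs : ∀ s : ℝ, s ∈ Set.Icc (0 : ℝ) B → |s * (s - 1) / (u - s)| ≤ B ^ 2 / (u - B) := by
      intro s hs
      have hus : (0 : ℝ) < u - s := by linarith [hs.2]
      rw [abs_div, abs_of_pos hus]
      have h1 : |s * (s - 1)| ≤ B ^ 2 := by
        rw [abs_mul]
        have hs1 : |s| ≤ B := by rw [abs_of_nonneg hs.1]; exact hs.2
        have hs2 : |s - 1| ≤ B := by
          rw [abs_le]; constructor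
          · linarith [hs.1]
          · linarith [hs.2]
        calc |s| * |s - 1| ≤ B * B :=
              mul_le_mul hs1 hs2 (abs_nonneg _) (by linarith)
          _ = B ^ 2 := by ring
      exact div_le_div₀ (by positivity) h1 huB (by linarith [hs.2])
    -- integrability of s(s-1)/(u-s)
    have meas2 : Measurable fun s : ℝ => s * (s - 1) / (u - s) :=
      (measurable_id.mul (measurable_id.sub measurable_const)).div
        (measurable_const.sub measurable_id)
    have hf2 : Integrable (fun s : ℝ => s * (s - 1) / (u - s)) ν := by
      refine ⟨meas2.aestronglyMeasurable, ?_⟩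
      apply HasFiniteIntegral.of_bounded (C := B ^ 2 / (u - B))
      filter_upwards [hae] with s hs
      rw [Real.norm_eq_abs]
      exact habs s hs
    -- key identity : g u - 1 = ∫ s(s-1)/(u-s)
    have hkey : g u - 1 = ∫ s, s * (s - 1) / (u - s) ∂ν := by
      rw [hg u, ← hmean, ← integral_const_mul, ← integral_sub (hf.const_mul _) hid]
      apply integral_congr_ae
      filter_upwards [hae] with s hs
      have hus : u - s ≠ 0 := by have := hs.2; intro h; nlinarith
      field_simp
      ring
    -- lower bound: ∫ s(s-1)/(u-s) ≥ ∫ (s-1)/(u-1) = 0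
    have hlow : (0 : ℝ) ≤ ∫ s, s * (s - 1) / (u - s) ∂ν := by
      have hg2 : Integrable (fun s : ℝ => (s - 1) / (u - 1)) ν :=
        (hid.sub (integrable_const 1)).div_const _
      have hzero : (∫ s, (s - 1) / (u - 1) ∂ν) = 0 := by
        rw [integral_div, integral_sub hid (integrable_const 1)]
        simp [hmean]
      have hmono : (∫ s, (s - 1) / (u - 1) ∂ν) ≤ ∫ s, s * (s - 1) / (u - s) ∂ν := by
        apply integral_mono_ae hg2 hf2
        filter_upwards [hae] with s hs
        have hus : (0 : ℝ) < u - s := by linarith [hs.2]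
        have hu1' : (0 : ℝ) < u - 1 := by linarith
        rw [div_le_div_iff₀ hu1' hus]
        nlinarith [mul_nonneg (show (0:ℝ) ≤ u by linarith) (sq_nonneg (s - 1))]
      linarith [hzero ▸ hmono]
    constructor
    · linarith [hkey ▸ hlow]
    · rw [hkey]
      have := norm_integral_le_of_norm_le_const
        (C := B ^ 2 / (u - B)) (μ := ν)
        (f := fun s : ℝ => s * (s - 1) / (u - s)) ?_
      · simpa [Real.norm_eq_abs] using this
      · filter_upwards [hae] with s hs
        rw [Real.norm_eq_abs]
        exact habs s hs
  have h1 : ∀ u : ℝ, B < u → 1 ≤ g u := fun u hu => (main u hu).1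
  have h2 : Tendsto g atTop (nhds 1) := by
    rw [← tendsto_sub_nhds_zero_iff]
    have hb : Tendsto (fun u : ℝ => B ^ 2 / (u - B)) atTop (nhds 0) := by
      apply Tendsto.div_atTop tendsto_const_nhds
      simpa [sub_eq_add_neg] using tendsto_atTop_add_const_right atTop (-B) tendsto_id
    refine squeeze_zero_norm' ?_ hb
    filter_upwards [eventually_gt_atTop B] with u hu
    simpa [Real.norm_eq_abs] using (main u hu).2
  refine ⟨h1, h2, fun c hc => ⟨fun u hu => ?_, ?_⟩⟩
  · nlinarith [h1 u hu]
  · have := h2.const_mul c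
    simpa using this
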